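/- Let Ω ⊂ ℝ² and let u ∈ C²(Ω) satisfy a_{11}u_{11} + 2a_{12}u_{12} + a_{22}u_{22} = 0 in Ω, where the symmetric matrix [a_ij(x)] satisfies I ≤ [a_ij(x)] ≤ γI pointwise for some γ ≥ 1. Then the pair w = (p, q) := (u_{x₂}, u_{x₁}) satisfies the quasiconformality inequality p₁² + p₂² + q₁² + q₂² ≤ (1 + γ)(p₁q₂ − p₂q₁) at every point of Ω, i.e. w is K-quasiconformal in Ω with K = (1 + γ)/2. -/

import Mathlib

set_option maxHeartbeats 1000000


open Finset

/-- Second partial derivative `∂_j ∂_i f` at `x` in the plane. -/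
noncomputable def pd2e (f : EuclideanSpace ℝ (Fin 2) → ℝ)
    (x : EuclideanSpace ℝ (Fin 2)) (i j : Fin 2) : ℝ :=
  fderiv ℝ (fun y => fderiv ℝ f y (EuclideanSpace.single i 1)) x (EuclideanSpace.single j 1)

/-- If `u` solves a uniformly elliptic equation in the plane with `I ≤ [a_ij] ≤ γI`, then
`w = (u_{x₂}, u_{x₁})` is `K`-quasiconformal with `K = (1+γ)/2`:
`p₁² + p₂² + q₁² + q₂² ≤ (1+γ)(p₁q₂ − p₂q₁)`. -/
lemma amgm (p q b x y : ℝ) (hp : 0 ≤ p) (hq : 0 ≤ q) (hb : b^2 ≤ p*q) :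
    2*b*x*y ≤ p*x^2 + q*y^2 := by
  have h1 : |b| ≤ Real.sqrt (p*q) := by
    rw [← Real.sqrt_sq_eq_abs]; exact Real.sqrt_le_sqrt hb
  have h2 : Real.sqrt (p*q) = Real.sqrt p * Real.sqrt q := Real.sqrt_mul hp q
  have h3 := sq_nonneg (Real.sqrt p * |x| - Real.sqrt q * |y|)
  have hpx : Real.sqrt p ^ 2 = p := Real.sq_sqrt hp
  have hqy : Real.sqrt q ^ 2 = q := Real.sq_sqrt hq
  have habs : b*x*y ≤ |b| * |x| * |y| := by
    calc b*x*y ≤ |b*x*y| := le_abs_self _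
    _ = |b| * |x| * |y| := by rw [abs_mul, abs_mul]
  have hxy : (0:ℝ) ≤ |x| * |y| := mul_nonneg (abs_nonneg x) (abs_nonneg y)
  have e1 : |b| * (|x| * |y|) ≤ (Real.sqrt p * Real.sqrt q) * (|x| * |y|) := by
    apply mul_le_mul_of_nonneg_right _ hxy; rw [← h2]; exact h1
  nlinarith [sq_abs x, sq_abs y]

lemma key (a b c γ A B C : ℝ) (hγ : 1 ≤ γ)
    (h1 : 1 ≤ a) (h2 : 1 ≤ c) (h3 : b^2 ≤ (a-1)*(c-1))
    (h4 : a ≤ γ) (h5 : c ≤ γ) (h6 : b^2 ≤ (γ-a)*(γ-c))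
    (heq : a*A + 2*b*B + c*C = 0) :
    A^2 + 2*B^2 + C^2 ≤ (1+γ)*(B^2 - A*C) := by
  set s := Real.sqrt ((a-c)^2 + 4*b^2) with hs
  have hs0 : 0 ≤ s := Real.sqrt_nonneg _
  have hs2 : s^2 = (a-c)^2 + 4*b^2 := Real.sq_sqrt (by positivity)
  set m := (a + c + s)/2 with hm
  have ham : a ≤ m := by nlinarith [sq_nonneg (s - (a-c))]
  have hcm : c ≤ m := by nlinarith [sq_nonneg (s - (c-a))]
  have hdet : (m-a)*(m-c) = b^2 := by nlinarith
  have hmγ : m ≤ γ := by nlinarith [sq_nonneg (s - (2*γ-a-c))]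
  have hmin : 1 + m ≤ a + c := by nlinarith [sq_nonneg (s - (a+c-2))]
  have hQ1l : B^2 + C^2 ≤ a*C^2 - 2*b*B*C + c*B^2 := by
    have := amgm (a-1) (c-1) b C B (by linarith) (by linarith) h3
    nlinarith
  have hQ2l : A^2 + B^2 ≤ a*B^2 - 2*b*A*B + c*A^2 := by
    have := amgm (a-1) (c-1) b B A (by linarith) (by linarith) h3
    nlinarith
  have hQ1u : a*C^2 - 2*b*B*C + c*B^2 ≤ m*(B^2 + C^2) := by
    have := amgm (m-a) (m-c) (-b) C B (by linarith) (by linarith) (by rw [neg_sq]; exact hdet.ge)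
    nlinarith
  have hQ2u : a*B^2 - 2*b*A*B + c*A^2 ≤ m*(A^2 + B^2) := by
    have := amgm (m-a) (m-c) (-b) B A (by linarith) (by linarith) (by rw [neg_sq]; exact hdet.ge)
    nlinarith
  set S := A^2 + 2*B^2 + C^2 with hS
  set T := A^2 + B^2 + C^2 + A*C with hT
  have hid : (a+c)*T = (a*C^2 - 2*b*B*C + c*B^2) + (a*B^2 - 2*b*A*B + c*A^2) := by
    rw [hT]; linear_combination (A+C) * heq
  have hSnn : 0 ≤ S := by rw [hS]; positivity
  have hST : S ≤ (a+c)*T := by rw [hS]; linarith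
  have hacT : (a+c)*T ≤ m*S := by rw [hS]; linarith
  have hT0 : 0 ≤ T := by nlinarith
  have hTm : (1+m)*T ≤ m*S := by nlinarith [mul_nonneg (show (0:ℝ) ≤ a+c-(1+m) by linarith) hT0]
  have hTS : T ≤ S := by nlinarith
  have hfin : (1+γ)*T ≤ γ*S := by nlinarith [mul_nonneg (show (0:ℝ) ≤ γ-m by linarith) (show (0:ℝ) ≤ S-T by linarith)]
  have hBT : B^2 - A*C = S - T := by rw [hS, hT]; ring
  rw [hBT]
  nlinarith

theorem stmt10 (γ : ℝ) (hγ : 1 ≤ γ) (Ω : Set (EuclideanSpace ℝ (Fin 2))) (hΩ : IsOpen Ω)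
    (u : EuclideanSpace ℝ (Fin 2) → ℝ) (hu : ContDiffOn ℝ 2 u Ω)
    (a : EuclideanSpace ℝ (Fin 2) → Matrix (Fin 2) (Fin 2) ℝ)
    (hsym : ∀ x ∈ Ω, (a x).IsSymm)
    (hell : ∀ x ∈ Ω, ∀ ξ : Fin 2 → ℝ,
      ∑ i, (ξ i) ^ 2 ≤ ∑ i, ∑ j, a x i j * ξ i * ξ j ∧
      ∑ i, ∑ j, a x i j * ξ i * ξ j ≤ γ * ∑ i, (ξ i) ^ 2)
    (heq : ∀ x ∈ Ω, ∑ i, ∑ j, a x i j * pd2e u x i j = 0) :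
    ∀ x ∈ Ω,
      (pd2e u x 1 0) ^ 2 + (pd2e u x 1 1) ^ 2 + (pd2e u x 0 0) ^ 2 + (pd2e u x 0 1) ^ 2 ≤
      (1 + γ) * (pd2e u x 1 0 * pd2e u x 0 1 - pd2e u x 1 1 * pd2e u x 0 0) := by
  intro x hx
  have hcd : ContDiffAt ℝ 2 u x := (hu x hx).contDiffAt (hΩ.mem_nhds hx)
  -- symmetry of second derivatives
  have hsd : DifferentiableAt ℝ (fderiv ℝ u) x :=
    (hcd.fderiv_right (m := 1) le_rfl).differentiableAt one_ne_zero
  have hpd : ∀ i j : Fin 2, pd2e u x i j =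
      fderiv ℝ (fderiv ℝ u) x (EuclideanSpace.single j 1) (EuclideanSpace.single i 1) := by
    intro i j
    unfold pd2e
    rw [fderiv_clm_apply hsd (differentiableAt_const _)]
    simp
  have hsymm : pd2e u x 0 1 = pd2e u x 1 0 := by
    rw [hpd, hpd]
    exact (hcd.isSymmSndFDerivAt (by simp)).eq _ _
  -- notation
  set A := pd2e u x 0 0 with hA
  set B := pd2e u x 0 1 with hB
  set C := pd2e u x 1 1 with hC
  set a00 := a x 0 0
  set a01 := a x 0 1
  set a11 := a x 1 1
  have hba : a x 1 0 = a01 := (hsym x hx).apply 0 1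
  -- scalar facts from ellipticity
  have h1 : 1 ≤ a00 := by
    have := (hell x hx ![1,0]).1
    simp [Fin.sum_univ_two] at this
    linarith
  have h2 : 1 ≤ a11 := by
    have := (hell x hx ![0,1]).1
    simp [Fin.sum_univ_two] at this
    linarith
  have h3 : a01^2 ≤ (a00-1)*(a11-1) := by
    have hd := discrim_le_zero (a := a00 - 1) (b := 2*a01) (c := a11 - 1) ?_
    · simp only [discrim] at hd; nlinarith
    · intro t
      have := (hell x hx ![t,1]).1
      simp [Fin.sum_univ_two, hba] at this
      nlinarith
  have h6 : a01^2 ≤ (γ-a00)*(γ-a11) := by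
    have hd := discrim_le_zero (a := γ - a00) (b := -(2*a01)) (c := γ - a11) ?_
    · simp only [discrim] at hd; nlinarith
    · intro t
      have := (hell x hx ![t,1]).2
      simp [Fin.sum_univ_two, hba] at this
      nlinarith
  have h4 : a00 ≤ γ := by
    have := (hell x hx ![1,0]).2
    simp [Fin.sum_univ_two] at this
    linarith
  have h5 : a11 ≤ γ := by
    have := (hell x hx ![0,1]).2
    simp [Fin.sum_univ_two] at this
    linarith
  have heqx : a00*A + 2*a01*B + a11*C = 0 := by
    have := heq x hx
    simp [Fin.sum_univ_two, hba] at this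
    have h10 : pd2e u x 1 0 = B := hsymm.symm
    rw [h10] at this
    linarith
  have := key a00 a01 a11 γ A B C hγ h1 h2 h3 h4 h5 h6 heqx
  rw [← hsymm]
  nlinarith
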